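/- Let $0 < \delta < 1$, $\alpha > 10$, and let $n, k$ be nonnegative integers with $|n - \alpha \log\log Q| \leq 100$ and $|k - \delta \log\log Q| \leq 100$ for some $Q \geq 16$. Then there exists an absolute constant $C > 10$ such that $\sum_{j \leq k} \binom{n}{j} \leq e^{C\alpha/\delta} (\log Q)^{\delta \log(1/\delta) + (1 + \log\alpha)\delta}$. -/

import Mathlib

set_option maxHeartbeats 1000000

open Real

lemma sum_choose_le_aux (n k : ℕ) (hk : 1 ≤ k) (hkn : k ≤ n) :
    ∑ j ∈ Finset.range (k+1), (n.choose j : ℝ) ≤ ((n:ℝ)/k)^k * Real.exp k := by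
  have hk0 : 0 < (k:ℝ) := by exact_mod_cast hk
  have hn0 : 0 < (n:ℝ) := by exact_mod_cast lt_of_lt_of_le (by exact_mod_cast hk) (by exact_mod_cast hkn)
  have hkn' : (k:ℝ)/n ≤ 1 := (div_le_one hn0).mpr (by exact_mod_cast hkn)
  have h1 : ∑ j ∈ Finset.range (k+1), (n.choose j : ℝ) * ((k:ℝ)/n)^k ≤
      ∑ j ∈ Finset.range (k+1), (n.choose j : ℝ) * ((k:ℝ)/n)^j := by
    apply Finset.sum_le_sum
    intro j hj
    have hj' : j ≤ k := by simpa [Nat.lt_succ_iff] using hj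
    have := pow_le_pow_of_le_one (by positivity) hkn' hj'
    exact mul_le_mul_of_nonneg_left this (by positivity)
  have h2 : ∑ j ∈ Finset.range (k+1), (n.choose j : ℝ) * ((k:ℝ)/n)^j ≤
      ((k:ℝ)/n + 1)^n := by
    rw [add_pow]
    have hsub : Finset.range (k+1) ⊆ Finset.range (n+1) := by
      apply Finset.range_subset_range.mpr; omega
    calc ∑ j ∈ Finset.range (k+1), (n.choose j : ℝ) * ((k:ℝ)/n)^j
        ≤ ∑ j ∈ Finset.range (n+1), (n.choose j : ℝ) * ((k:ℝ)/n)^j := by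
          apply Finset.sum_le_sum_of_subset_of_nonneg hsub
          intro j _ _; positivity
      _ = ∑ j ∈ Finset.range (n+1), ((k:ℝ)/n)^j * (1:ℝ)^(n-j) * (n.choose j : ℝ) := by
          apply Finset.sum_congr rfl; intro j _; ring
  have h3 : ((k:ℝ)/n + 1)^n ≤ Real.exp k := by
    have hx : (k:ℝ)/n + 1 ≤ Real.exp ((k:ℝ)/n) := by
      have := Real.add_one_le_exp ((k:ℝ)/n); linarith
    calc ((k:ℝ)/n + 1)^n ≤ (Real.exp ((k:ℝ)/n))^n := by
          apply pow_le_pow_left₀ (by positivity) hx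
      _ = Real.exp ((n:ℕ) * ((k:ℝ)/n)) := by rw [Real.exp_nat_mul]
      _ = Real.exp k := by
          congr 1; field_simp
  have hab : ((k:ℝ)/n)^k * ((n:ℝ)/k)^k = 1 := by
    rw [← mul_pow]
    rw [show (k:ℝ)/n * ((n:ℝ)/k) = 1 by field_simp]
    exact one_pow k
  calc ∑ j ∈ Finset.range (k+1), (n.choose j : ℝ)
      = (∑ j ∈ Finset.range (k+1), (n.choose j : ℝ) * ((k:ℝ)/n)^k) * ((n:ℝ)/k)^k := by
        rw [← Finset.sum_mul, mul_assoc, hab, mul_one]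
    _ ≤ Real.exp k * ((n:ℝ)/k)^k := by
        apply mul_le_mul_of_nonneg_right (h1.trans (h2.trans h3)) (by positivity)
    _ = ((n:ℝ)/k)^k * Real.exp k := by ring

/-- Entropy bound for partial binomial sums: there is an absolute constant `C > 10`
such that whenever `0 < δ < 1`, `α > 10`, `Q ≥ 16`, `|n - α loglog Q| ≤ 100` and
`|k - δ loglog Q| ≤ 100`, one has
`∑_{j ≤ k} C(n,j) ≤ e^{Cα/δ} (log Q)^{δ log(1/δ) + (1 + log α) δ}`. -/
theorem binomial_sum_bound :
    ∃ C : ℝ, 10 < C ∧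
      ∀ (δ α Q : ℝ) (n k : ℕ), 0 < δ → δ < 1 → 10 < α → 16 ≤ Q →
        |(n : ℝ) - α * Real.log (Real.log Q)| ≤ 100 →
        |(k : ℝ) - δ * Real.log (Real.log Q)| ≤ 100 →
        ∑ j ∈ Finset.range (k + 1), (n.choose j : ℝ) ≤
          Real.exp (C * α / δ) *
            Real.log Q ^ (δ * Real.log (1/δ) + (1 + Real.log α) * δ) := by
  refine ⟨10000, by norm_num, ?_⟩
  intro δ α Q n k hδ0 hδ1 hα hQ hn hk
  obtain ⟨L, hLdef⟩ : ∃ L, L = Real.log (Real.log Q) := ⟨_, rfl⟩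
  rw [← hLdef] at hn hk
  have hlog2 := Real.log_two_gt_d9
  have hlog16 : Real.log 16 = 4 * Real.log 2 := by
    rw [show (16:ℝ) = 2^4 by norm_num, Real.log_pow]; push_cast; ring
  have hlogQ : (2.7182818286 : ℝ) < Real.log Q := by
    have h16 : Real.log 16 ≤ Real.log Q := Real.log_le_log (by norm_num) hQ
    nlinarith
  have hlogQpos : (0:ℝ) < Real.log Q := by linarith
  have hL1 : (1:ℝ) ≤ L := by
    have he : Real.exp 1 ≤ Real.log Q := le_of_lt (lt_trans Real.exp_one_lt_d9 hlogQ)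
    rw [hLdef]
    calc (1:ℝ) = Real.log (Real.exp 1) := (Real.log_exp 1).symm
      _ ≤ Real.log (Real.log Q) := Real.log_le_log (Real.exp_pos 1) he
  have hL0 : (0:ℝ) < L := by linarith
  rw [abs_le] at hn hk
  obtain ⟨hn2, hn1⟩ := hn
  obtain ⟨hk2, hk1⟩ := hk
  have hN1 : (n:ℝ) ≤ α * L + 100 := by linarith
  have hN2 : α * L - 100 ≤ (n:ℝ) := by linarith
  have hK1 : (k:ℝ) ≤ δ * L + 100 := by linarith
  have hK2 : δ * L - 100 ≤ (k:ℝ) := by linarith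
  have hα0 : (0:ℝ) < α := by linarith
  have hlogα : 0 ≤ Real.log α := Real.log_nonneg (by linarith)
  have hlogδ : 0 ≤ Real.log (1/δ) := Real.log_nonneg (by rw [le_div_iff₀ hδ0]; linarith)
  have hlogαle : Real.log α ≤ α := by
    have := Real.log_le_sub_one_of_pos hα0; linarith
  have hlogδle : Real.log (1/δ) ≤ 1/δ := by
    have := Real.log_le_sub_one_of_pos (show (0:ℝ) < 1/δ by positivity); linarith
  have hd : (10:ℝ) < α / δ := lt_of_lt_of_le hα (by rw [le_div_iff₀ hδ0]; nlinarith)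
  have hαd : α ≤ α / δ := by rw [le_div_iff₀ hδ0]; nlinarith
  have h1d : 1/δ ≤ (α/δ) / 10 := by
    rw [div_div, div_le_div_iff₀ hδ0 (by positivity)]
    nlinarith
  have hRHS : Real.exp (10000 * α / δ) * Real.log Q ^ (δ * Real.log (1/δ) + (1 + Real.log α) * δ)
      = Real.exp (10000 * α / δ + L * (δ * Real.log (1/δ) + (1 + Real.log α) * δ)) := by
    rw [Real.rpow_def_of_pos hlogQpos, ← Real.exp_add, hLdef]
  rw [hRHS]
  obtain ⟨E, hEdef⟩ : ∃ E, E = δ * Real.log (1/δ) + (1 + Real.log α) * δ := ⟨_, rfl⟩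
  rw [← hEdef]
  have hE0 : 0 ≤ E := by rw [hEdef]; nlinarith
  have hLE : 0 ≤ L * E := mul_nonneg (le_of_lt hL0) hE0
  have h10000 : 10000 * α / δ = 10000 * (α/δ) := by ring
  by_cases hcase : n < k
  · -- sum equals 2^n
    have hsum : ∑ j ∈ Finset.range (k+1), (n.choose j : ℝ) = 2^n := by
      have hnat : ∑ j ∈ Finset.range (k+1), n.choose j = 2^n := by
        rw [← Nat.sum_range_choose n]
        refine (Finset.sum_subset (Finset.range_subset_range.mpr (by omega)) ?_).symm
        intro x _ hx
        rw [Finset.mem_range] at hx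
        exact Nat.choose_eq_zero_of_lt (by omega)
      exact_mod_cast congrArg (Nat.cast : ℕ → ℝ) hnat
    rw [hsum]
    have hnk : (n:ℝ) + 1 ≤ (k:ℝ) := by exact_mod_cast hcase
    have hLbound : α * L - δ * L ≤ 200 := by linarith
    have hnle : (n:ℝ) ≤ 33 * α := by
      have h9 : (9:ℝ) ≤ α - δ := by linarith
      have h9L : 9 * L ≤ α * L - δ * L := by linarith [mul_le_mul_of_nonneg_right h9 hL0.le]
      have hL23 : L ≤ 200/9 := by linarith
      have hαL : α * L ≤ α * (200/9) := mul_le_mul_of_nonneg_left hL23 hα0.le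
      linarith
    calc (2:ℝ)^n ≤ (Real.exp 1)^n := by
          apply pow_le_pow_left₀ (by norm_num)
          have := Real.exp_one_gt_d9; linarith
      _ = Real.exp ((n:ℕ) * (1:ℝ)) := by rw [Real.exp_nat_mul]
      _ ≤ Real.exp (10000 * α / δ + L * E) := by
          apply Real.exp_le_exp.mpr
          rw [h10000]
          linarith [hαd, hLE, hd]
  · push_neg at hcase
    by_cases hk0 : k = 0
    · subst hk0
      simp only [zero_add, Finset.range_one, Finset.sum_singleton, Nat.choose_zero_right,
        Nat.cast_one]
      rw [Real.one_le_exp_iff]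
      have : 0 < 10000 * (α/δ) := by positivity
      rw [h10000]; linarith
    · have hk1' : 1 ≤ k := Nat.one_le_iff_ne_zero.mpr hk0
      have main := sum_choose_le_aux n k hk1' hcase
      have hK0 : (1:ℝ) ≤ (k:ℝ) := by exact_mod_cast hk1'
      have hKpos : (0:ℝ) < k := by linarith
      have hNK : (k:ℝ) ≤ (n:ℝ) := by exact_mod_cast hcase
      have hNpos : (0:ℝ) < (n:ℝ) := by linarith
      have hq : (0:ℝ) < (n:ℝ)/(k:ℝ) := by positivity
      have hrw : ((n:ℝ)/(k:ℝ))^k * Real.exp k = Real.exp ((k:ℕ) * Real.log ((n:ℝ)/(k:ℝ)) + k) := by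
        rw [Real.exp_add, Real.exp_nat_mul, Real.exp_log hq]
      rw [hrw] at main
      refine main.trans ?_
      apply Real.exp_le_exp.mpr
      have hlogq0 : 0 ≤ Real.log ((n:ℝ)/k) := Real.log_nonneg ((le_div_iff₀ hKpos).mpr (by linarith))
      rw [h10000]
      by_cases hbig : δ * L ≤ 200
      · -- small δL case
        have hK300 : (k:ℝ) ≤ 300 := by linarith
        have hαL10 : (10:ℝ) ≤ α * L := by
          have := mul_le_mul hα.le hL1 (by norm_num) hα0.le
          linarith
        have hNle : (n:ℝ) ≤ 11 * (α * L) := by linarith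
        have hlogN : Real.log ((n:ℝ)/k) ≤ Real.log 11 + Real.log α + Real.log L := by
          have h1' : (n:ℝ)/k ≤ (n:ℝ) := div_le_self hNpos.le hK0
          have h2' : Real.log ((n:ℝ)/k) ≤ Real.log (n:ℝ) := Real.log_le_log hq h1'
          have h3' : Real.log (n:ℝ) ≤ Real.log (11 * (α*L)) := Real.log_le_log hNpos hNle
          rw [Real.log_mul (by norm_num) (by positivity), Real.log_mul (by positivity) (by positivity)] at h3'
          linarith
        have hlog11 : Real.log 11 ≤ 10 := by
          have := Real.log_le_sub_one_of_pos (show (0:ℝ) < 11 by norm_num); linarith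
        have hlogL : Real.log L ≤ 199 + 1/δ := by
          have hL200 : L ≤ 200 * (1/δ) := by
            rw [mul_one_div, le_div_iff₀ hδ0]; linarith [mul_comm L δ]
          have hm : Real.log L ≤ Real.log (200 * (1/δ)) := Real.log_le_log hL0 hL200
          rw [Real.log_mul (by norm_num) (by positivity)] at hm
          have h200 : Real.log 200 ≤ 199 := by
            have := Real.log_le_sub_one_of_pos (show (0:ℝ) < 200 by norm_num); linarith
          linarith
        have hmul : (k:ℝ) * Real.log ((n:ℝ)/k) ≤ 300 * (Real.log 11 + Real.log α + Real.log L) := by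
          apply mul_le_mul hK300 hlogN hlogq0 (by norm_num)
        linarith [hmul, hlog11, hlogαle, hlogL, hK300, hαd, h1d, hd, hLE]
      · push_neg at hbig
        have hδL0 : (0:ℝ) < δ * L := by linarith
        have hδLne : δ * L - 100 > 0 := by linarith
        have hαL0 : (0:ℝ) < α * L := by positivity
        have hlogsplit : Real.log ((n:ℝ)/k) = Real.log (n:ℝ) - Real.log (k:ℝ) :=
          Real.log_div (by positivity) (by positivity)
        have ha1 : Real.log (n:ℝ) ≤ Real.log (α*L) + 100/(α*L) := by
          have h1' : Real.log (n:ℝ) ≤ Real.log (α*L + 100) := Real.log_le_log hNpos hN1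
          have h2' : Real.log (α*L + 100) - Real.log (α*L) = Real.log ((α*L+100)/(α*L)) :=
            (Real.log_div (by positivity) (by positivity)).symm
          have h3' : Real.log ((α*L+100)/(α*L)) ≤ (α*L+100)/(α*L) - 1 :=
            Real.log_le_sub_one_of_pos (by positivity)
          have h4' : (α*L+100)/(α*L) - 1 = 100/(α*L) := by field_simp; ring
          linarith
        have hb1 : Real.log (δ*L) - 200/(δ*L) ≤ Real.log (k:ℝ) := by
          have h1' : Real.log (δ*L - 100) ≤ Real.log (k:ℝ) := Real.log_le_log hδLne hK2
          have h2' : Real.log (δ*L) - Real.log (δ*L-100) = Real.log ((δ*L)/(δ*L-100)) :=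
            (Real.log_div (by positivity) (by positivity)).symm
          have h3' : Real.log ((δ*L)/(δ*L-100)) ≤ (δ*L)/(δ*L-100) - 1 :=
            Real.log_le_sub_one_of_pos (by positivity)
          have h4' : (δ*L)/(δ*L-100) - 1 = 100/(δ*L-100) := by field_simp; ring
          have h5' : 100/(δ*L-100) ≤ 200/(δ*L) := by
            rw [div_le_div_iff₀ hδLne hδL0]; nlinarith
          linarith
        have hlogαL : Real.log (α*L) = Real.log α + Real.log L :=
          Real.log_mul (by positivity) (by positivity)
        have hlogδL : Real.log (δ*L) = Real.log δ + Real.log L :=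
          Real.log_mul (by positivity) (by positivity)
        have hlogδinv : Real.log (1/δ) = - Real.log δ := by rw [one_div, Real.log_inv]
        have h100 : 100/(α*L) ≤ 100/(δ*L) := by
          rw [div_le_div_iff₀ hαL0 hδL0]; nlinarith
        have hsum300 : 100/(δ*L) + 200/(δ*L) = 300/(δ*L) := by ring
        have hq_le : Real.log ((n:ℝ)/k) ≤ Real.log α + Real.log (1/δ) + 300/(δ*L) := by
          rw [hlogsplit]; linarith
        have hkprod : (k:ℝ) * Real.log ((n:ℝ)/k) ≤
            (δ*L + 100) * (Real.log α + Real.log (1/δ) + 300/(δ*L)) := by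
          apply mul_le_mul hK1 hq_le hlogq0 (by linarith)
        have hexpand : (δ*L + 100) * (Real.log α + Real.log (1/δ) + 300/(δ*L)) =
            δ*L*(Real.log α + Real.log (1/δ)) + 300 + 100*(Real.log α + Real.log (1/δ))
              + 30000/(δ*L) := by
          field_simp; ring
        have h30000 : 30000/(δ*L) ≤ 150 := by
          rw [div_le_iff₀ hδL0]; linarith
        have hLE2 : L * E = δ*L*(Real.log α + Real.log (1/δ)) + δ*L := by
          rw [hEdef]; ring
        linarith [hkprod, hexpand, h30000, hLE2, hK1, hlogαle, hlogδle, hαd, h1d, hd]
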